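/- arXiv:2307.03209 — 2 statements merged into one kernel-verified Lean document; each statement's English description precedes it below -/
import Mathlib

section
/- A semigraph G is connected if and only if the second smallest eigenvalue λ₂ of its Laplacian L satisfies λ₂ > 0; equivalently, G is connected if and only if the kernel of L is one-dimensional (spanned by the all-ones vector). -/
open Matrix BigOperators

/-- A semigraph on a finite vertex type `V`: edges are ordered tuples (lists) of
distinct vertices, of length at least 2, and any two distinct edges share at most
one vertex. -/
structure Semigraph (V : Type) [Fintype V] [DecidableEq V] where
  edges : Finset (List V)
  nodup : ∀ e ∈ edges, e.Nodup
  two_le : ∀ e ∈ edges, 2 ≤ e.length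
  inter : ∀ e₁ ∈ edges, ∀ e₂ ∈ edges, e₁ ≠ e₂ → (e₁.toFinset ∩ e₂.toFinset).card ≤ 1

namespace Semigraph

variable {V : Type} [Fintype V] [DecidableEq V] (G : Semigraph V)

/-- `v` is an end vertex of the edge `e`. -/
def IsEndOf (v : V) (e : List V) : Prop := e.head? = some v ∨ e.getLast? = some v

/-- `v` is a middle vertex of the edge `e`. -/
def IsMiddleOf (v : V) (e : List V) : Prop := v ∈ e ∧ ¬ IsEndOf v e

/-- `v` is a middle end vertex: a middle vertex of some edge and an end vertex of
some (other) edge. -/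
def IsMiddleEnd (v : V) : Prop :=
  (∃ e ∈ G.edges, IsMiddleOf v e) ∧ (∃ e ∈ G.edges, IsEndOf v e)

/-- `v` is a pure end vertex: it lies on some edge and is an end vertex of every
edge containing it. -/
def IsPureEnd (v : V) : Prop :=
  (∃ e ∈ G.edges, v ∈ e) ∧ ∀ e ∈ G.edges, v ∈ e → IsEndOf v e

open Classical in
/-- The adjacency weight contributed by the edge `e` to the pair of vertices `(u, v)`:
the skeleton distance between `u` and `v` inside `e`, halved once for a partial half
edge at the head, and halved once for a partial half edge at the tail (so a quarter
edge gets weight `1/4`). -/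
noncomputable def pairWeight (e : List V) (u v : V) : ℝ :=
  if u ∈ e ∧ v ∈ e ∧ u ≠ v then
    (Nat.dist (e.idxOf u) (e.idxOf v) : ℝ) *
      (if ({e.idxOf u, e.idxOf v} : Set ℕ) = {0, 1} ∧
          (∃ w, e.head? = some w ∧ G.IsMiddleEnd w) then (1:ℝ)/2 else 1) *
      (if ({e.idxOf u, e.idxOf v} : Set ℕ) = {e.length - 2, e.length - 1} ∧
          (∃ w, e.getLast? = some w ∧ G.IsMiddleEnd w) then (1:ℝ)/2 else 1)
  else 0

/-- The adjacency matrix of a semigraph. -/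
noncomputable def adj : Matrix V V ℝ :=
  fun u v => ∑ e ∈ G.edges, G.pairWeight e u v

/-- The degree of a vertex: the corresponding row sum of the adjacency matrix. -/
noncomputable def degree (v : V) : ℝ := ∑ u, G.adj v u

/-- The Laplacian matrix `L = D - A` of a semigraph. -/
noncomputable def lap : Matrix V V ℝ :=
  Matrix.diagonal G.degree - G.adj

/-- The Laplacian of a single edge, padded by zeros to an `n × n` matrix. -/
noncomputable def edgeLap (e : List V) : Matrix V V ℝ :=
  fun u v => if u = v then ∑ w, G.pairWeight e u w else - G.pairWeight e u v

/-- Two vertices are adjacent if they lie on a common edge. -/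
def Adjacent (u v : V) : Prop := u ≠ v ∧ ∃ e ∈ G.edges, u ∈ e ∧ v ∈ e

/-- A semigraph is connected if any two vertices are joined by a chain of edges. -/
def Connected : Prop :=
  ∀ u v : V, Relation.ReflTransGen (fun a b => ∃ e ∈ G.edges, a ∈ e ∧ b ∈ e) u v

end Semigraph


section Aux

open Semigraph

variable {V : Type} [Fintype V] [DecidableEq V] (G : Semigraph V)

lemma pw_nonneg (e : List V) (u v : V) : 0 ≤ G.pairWeight e u v := by
  unfold Semigraph.pairWeight
  split_ifs <;> positivity

lemma pw_symm (e : List V) (u v : V) : G.pairWeight e u v = G.pairWeight e v u := by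
  unfold Semigraph.pairWeight
  have h1 : (u ∈ e ∧ v ∈ e ∧ u ≠ v) = (v ∈ e ∧ u ∈ e ∧ v ≠ u) := by
    apply propext; constructor <;> rintro ⟨a, b, c⟩ <;> exact ⟨b, a, c.symm⟩
  simp only [h1, Nat.dist_comm (e.idxOf u) (e.idxOf v)]
  have hs1 : ({e.idxOf u, e.idxOf v} : Set ℕ) = {e.idxOf v, e.idxOf u} :=
    Set.pair_comm _ _
  rw [hs1]

lemma pw_zero (e : List V) (u v : V) (h : ¬ (u ∈ e ∧ v ∈ e ∧ u ≠ v)) :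
    G.pairWeight e u v = 0 := by
  unfold Semigraph.pairWeight
  rw [if_neg h]

lemma pw_pos (e : List V) (u v : V) (hu : u ∈ e) (hv : v ∈ e) (huv : u ≠ v) :
    0 < G.pairWeight e u v := by
  unfold Semigraph.pairWeight
  rw [if_pos ⟨hu, hv, huv⟩]
  have hidx : e.idxOf u ≠ e.idxOf v := fun h =>
    huv ((List.idxOf_inj hu).1 h)
  have hd : 0 < Nat.dist (e.idxOf u) (e.idxOf v) := Nat.dist_pos_of_ne hidx
  have hd' : (0 : ℝ) < (Nat.dist (e.idxOf u) (e.idxOf v) : ℝ) := by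
    exact_mod_cast hd
  split_ifs <;> positivity

lemma adj_nonneg (u v : V) : 0 ≤ G.adj u v :=
  Finset.sum_nonneg fun e _ => pw_nonneg G e u v

lemma adj_symm (u v : V) : G.adj u v = G.adj v u :=
  Finset.sum_congr rfl fun e _ => pw_symm G e u v

lemma adj_pos {u v : V} {e : List V} (he : e ∈ G.edges) (hu : u ∈ e) (hv : v ∈ e)
    (huv : u ≠ v) : 0 < G.adj u v :=
  Finset.sum_pos' (fun e _ => pw_nonneg G e u v) ⟨e, he, pw_pos G e u v hu hv huv⟩

lemma adj_shared {u v : V} (h : G.adj u v ≠ 0) : ∃ e ∈ G.edges, u ∈ e ∧ v ∈ e := by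
  by_contra hc
  push_neg at hc
  apply h
  refine Finset.sum_eq_zero fun e he => pw_zero G e u v ?_
  intro ⟨h1, h2, _⟩
  exact (hc e he h1) h2

lemma lap_row (x : V → ℝ) (v : V) :
    (G.lap *ᵥ x) v = ∑ u, G.adj v u * (x v - x u) := by
  simp only [Matrix.mulVec, dotProduct, Semigraph.lap, Matrix.sub_apply,
    Matrix.diagonal_apply, Semigraph.degree, mul_sub, sub_mul, ite_mul, zero_mul,
    Finset.sum_sub_distrib, Finset.sum_ite_eq, Finset.mem_univ, if_true,
    Finset.sum_mul]

end Aux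

/-- A semigraph is connected if and only if the second smallest Laplacian
eigenvalue is positive; equivalently, iff the kernel of `L` is exactly the span of the
all-ones vector, i.e. every vector in the kernel is constant. -/
theorem stmt6 {V : Type} [Fintype V] [DecidableEq V] (G : Semigraph V) :
    G.Connected ↔ ∀ x : V → ℝ, G.lap *ᵥ x = 0 → ∃ c : ℝ, x = fun _ => c := by
  classical
  constructor
  · intro hconn x hx
    have h1 : ∀ v, ∑ u, G.adj v u * (x v - x u) = 0 := by
      intro v
      have h := congrFun hx v
      rw [lap_row] at h
      simpa using h
    have hA : ∑ v, ∑ u, G.adj v u * x v * (x v - x u) = 0 := by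
      refine Finset.sum_eq_zero fun v _ => ?_
      have : ∑ u, G.adj v u * x v * (x v - x u) = x v * ∑ u, G.adj v u * (x v - x u) := by
        rw [Finset.mul_sum]; exact Finset.sum_congr rfl fun u _ => by ring
      rw [this, h1 v, mul_zero]
    have hB : ∑ v, ∑ u, G.adj v u * x u * (x v - x u) = 0 := by
      rw [Finset.sum_comm]
      refine Finset.sum_eq_zero fun u _ => ?_
      have : ∑ v, G.adj v u * x u * (x v - x u)
          = -(x u * ∑ v, G.adj u v * (x u - x v)) := by
        rw [Finset.mul_sum, ← Finset.sum_neg_distrib]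
        exact Finset.sum_congr rfl fun v _ => by rw [adj_symm G v u]; ring
      rw [this, h1 u, mul_zero, neg_zero]
    have h2 : ∑ v, ∑ u, G.adj v u * (x v - x u) ^ 2 = 0 := by
      have : ∑ v, ∑ u, G.adj v u * (x v - x u) ^ 2
          = (∑ v, ∑ u, G.adj v u * x v * (x v - x u))
            - ∑ v, ∑ u, G.adj v u * x u * (x v - x u) := by
        rw [← Finset.sum_sub_distrib]
        refine Finset.sum_congr rfl fun v _ => ?_
        rw [← Finset.sum_sub_distrib]
        exact Finset.sum_congr rfl fun u _ => by ring
      rw [this, hA, hB, sub_zero]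
    have h3 : ∀ v u : V, G.adj v u * (x v - x u) ^ 2 = 0 := by
      have hnn : ∀ v ∈ Finset.univ, (0:ℝ) ≤ ∑ u, G.adj v u * (x v - x u) ^ 2 :=
        fun v _ => Finset.sum_nonneg fun u _ =>
          mul_nonneg (adj_nonneg G v u) (sq_nonneg _)
      intro v u
      have hv := (Finset.sum_eq_zero_iff_of_nonneg hnn).1 h2 v (Finset.mem_univ v)
      have hnn2 : ∀ u ∈ Finset.univ, (0:ℝ) ≤ G.adj v u * (x v - x u) ^ 2 :=
        fun u _ => mul_nonneg (adj_nonneg G v u) (sq_nonneg _)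
      exact (Finset.sum_eq_zero_iff_of_nonneg hnn2).1 hv u (Finset.mem_univ u)
    have h4 : ∀ a b : V, (∃ e ∈ G.edges, a ∈ e ∧ b ∈ e) → x a = x b := by
      intro a b ⟨e, he, ha, hb⟩
      by_cases hab : a = b
      · rw [hab]
      · have hpos := adj_pos G he ha hb hab
        have := h3 a b
        have hsq : (x a - x b) ^ 2 = 0 := by
          rcases mul_eq_zero.1 this with h | h
          · exact absurd h (ne_of_gt hpos)
          · exact h
        have := pow_eq_zero_iff (n := 2) (by norm_num) |>.1 hsq
        linarith [sub_eq_zero.1 this]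
    cases isEmpty_or_nonempty V with
    | inl hE => exact ⟨0, funext fun v => (hE.false v).elim⟩
    | inr hNE =>
      obtain ⟨v₀⟩ := hNE
      refine ⟨x v₀, funext fun v => ?_⟩
      have : x v₀ = x v := by
        induction hconn v₀ v with
        | refl => rfl
        | tail _ hstep ih => exact ih.trans (h4 _ _ hstep)
      exact this.symm
  · intro h u v
    set rel : V → V → Prop := fun a b => ∃ e ∈ G.edges, a ∈ e ∧ b ∈ e with hrel
    set x : V → ℝ := fun b => if Relation.ReflTransGen rel u b then 1 else 0 with hxdef
    have hx : G.lap *ᵥ x = 0 := by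
      funext w
      rw [lap_row]
      simp only [Pi.zero_apply]
      refine Finset.sum_eq_zero fun w' _ => ?_
      by_cases ha : G.adj w w' = 0
      · rw [ha, zero_mul]
      · obtain ⟨e, he, h1, h2⟩ := adj_shared G ha
        have hiff : Relation.ReflTransGen rel u w ↔ Relation.ReflTransGen rel u w' :=
          ⟨fun hh => hh.tail ⟨e, he, h1, h2⟩, fun hh => hh.tail ⟨e, he, h2, h1⟩⟩
        have hxeq : x w = x w' := by
          simp only [hxdef]
          exact if_congr hiff rfl rfl
        rw [hxeq, sub_self, mul_zero]
    obtain ⟨c, hc⟩ := h x hx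
    have hu1 : x u = 1 := by
      simp only [hxdef]
      exact if_pos Relation.ReflTransGen.refl
    have hv1 : x v = 1 := by
      have h1 : x u = c := by rw [hc]
      have h2 : x v = c := by rw [hc]
      rw [h2, ← h1, hu1]
    by_contra hcon
    rw [hxdef] at hv1
    simp only [if_neg hcon] at hv1
    exact zero_ne_one hv1
end

section
/- Let G be a connected semigraph with at least one edge and Laplacian eigenvalues 0 = λ₁ ≤ ... ≤ λ_n. Then λ_n ≤ max_{i∼j} { d_i + d_j − C(i,j) }, where the maximum runs over pairs of adjacent vertices i, j, d_i is the degree of vertex i, and C(i,j) = C_S(i,j) + (1/2)C_{1/2}(i,j) + (1/4)C_{1/4}(i,j) + Σ_{l≥2} l·C_l(i,j) counts weighted common neighbors of i and j. -/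
open Matrix BigOperators

open Classical in
/-- The weighted count of common neighbours of `u` and `v`: a vertex `k` contributes
the common adjacency weight when it is adjacent to both `u` and `v` with the same
weight (weight `1` for partial edges, `1/2` for partial half edges, `1/4` for quarter
edges, and `l` for vertices at skeleton distance `l` from each). -/
noncomputable def Semigraph.commonC {V : Type} [Fintype V] [DecidableEq V]
    (G : Semigraph V) (u v : V) : ℝ :=
  ∑ k ∈ Finset.univ \ {u, v}, if G.adj u k = G.adj v k then G.adj u k else 0


namespace Semigraph

variable {V : Type} [Fintype V] [DecidableEq V] (G : Semigraph V)

lemma pairWeight_nonneg (e : List V) (u v : V) : 0 ≤ G.pairWeight e u v := by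
  unfold pairWeight
  split_ifs <;> positivity

lemma pairWeight_symm (e : List V) (u v : V) : G.pairWeight e u v = G.pairWeight e v u := by
  unfold pairWeight
  by_cases h : u ∈ e ∧ v ∈ e ∧ u ≠ v
  · have h' : v ∈ e ∧ u ∈ e ∧ v ≠ u := ⟨h.2.1, h.1, h.2.2.symm⟩
    rw [if_pos h, if_pos h', Nat.dist_comm, Set.pair_comm (e.idxOf u) (e.idxOf v)]
  · rw [if_neg h, if_neg (by tauto)]

lemma pairWeight_pos {e : List V} {u v : V} (hu : u ∈ e) (hv : v ∈ e) (huv : u ≠ v) :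
    0 < G.pairWeight e u v := by
  unfold pairWeight
  rw [if_pos ⟨hu, hv, huv⟩]
  have hne : e.idxOf u ≠ e.idxOf v := fun h => huv ((List.idxOf_inj hu).mp h)
  have hd : 0 < Nat.dist (e.idxOf u) (e.idxOf v) := Nat.dist_pos_of_ne hne
  have hd' : (1 : ℝ) ≤ (Nat.dist (e.idxOf u) (e.idxOf v) : ℝ) := by exact_mod_cast hd
  split_ifs <;> nlinarith

lemma adj_nonneg (u v : V) : 0 ≤ G.adj u v :=
  Finset.sum_nonneg fun e _ => G.pairWeight_nonneg e u v

lemma adj_symm (u v : V) : G.adj u v = G.adj v u :=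
  Finset.sum_congr rfl fun e _ => G.pairWeight_symm e u v

lemma adj_self (u : V) : G.adj u u = 0 := by
  apply Finset.sum_eq_zero
  intro e _
  unfold pairWeight
  rw [if_neg (by tauto)]

lemma adjacent_of_adj_ne {u v : V} (h : G.adj u v ≠ 0) : G.Adjacent u v := by
  obtain ⟨e, he, hpw⟩ : ∃ e ∈ G.edges, G.pairWeight e u v ≠ 0 := by
    by_contra hc
    push_neg at hc
    exact h (Finset.sum_eq_zero hc)
  by_cases hcond : u ∈ e ∧ v ∈ e ∧ u ≠ v
  · exact ⟨hcond.2.2, e, he, hcond.1, hcond.2.1⟩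
  · exfalso; apply hpw; unfold pairWeight; rw [if_neg hcond]

lemma two_mem {e : List V} (h2 : 2 ≤ e.length) (hn : e.Nodup) :
    ∃ u v, u ∈ e ∧ v ∈ e ∧ u ≠ v := by
  match e, h2, hn with
  | a :: b :: t, _, hn =>
    refine ⟨a, b, List.mem_cons_self, List.mem_cons_of_mem _ List.mem_cons_self, ?_⟩
    simp only [List.nodup_cons, List.mem_cons] at hn
    exact fun hab => hn.1 (Or.inl hab)

lemma exists_mem_ne {e : List V} (h2 : 2 ≤ e.length) (hn : e.Nodup) (u : V) :
    ∃ v ∈ e, v ≠ u := by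
  obtain ⟨a, b, ha, hb, hab⟩ := two_mem h2 hn
  by_cases hau : a = u
  · exact ⟨b, hb, fun h => hab (hau ▸ h ▸ rfl)⟩
  · exact ⟨a, ha, hau⟩

lemma exists_adj_ne (hG : G.Connected) (hE : G.edges.Nonempty) (u : V) :
    ∃ v, G.adj u v ≠ 0 := by
  obtain ⟨e₀, he₀⟩ := hE
  obtain ⟨w, hw, -⟩ := exists_mem_ne (G.two_le e₀ he₀) (G.nodup e₀ he₀) u
  have hchain := hG u w
  have hedge : ∃ e ∈ G.edges, u ∈ e := by
    rcases hchain.cases_head with h | ⟨c, ⟨e, he, hue, _⟩, _⟩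
    · exact ⟨e₀, he₀, h ▸ hw⟩
    · exact ⟨e, he, hue⟩
  obtain ⟨e, he, hue⟩ := hedge
  obtain ⟨v, hv, hvu⟩ := exists_mem_ne (G.two_le e he) (G.nodup e he) u
  refine ⟨v, ?_⟩
  have hpos : 0 < G.adj u v :=
    Finset.sum_pos' (fun e' _ => G.pairWeight_nonneg e' u v)
      ⟨e, he, G.pairWeight_pos hue hv (Ne.symm hvu)⟩
  exact hpos.ne'

lemma degree_nonneg (u : V) : 0 ≤ G.degree u :=
  Finset.sum_nonneg fun v _ => G.adj_nonneg u v

lemma commonC_le_degree (u v : V) : G.commonC u v ≤ G.degree u := by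
  unfold commonC degree
  calc (∑ k ∈ Finset.univ \ {u, v}, if G.adj u k = G.adj v k then G.adj u k else 0)
      ≤ ∑ k ∈ Finset.univ \ {u, v}, G.adj u k := by
        apply Finset.sum_le_sum
        intro k _
        split_ifs
        · exact le_refl _
        · exact G.adj_nonneg u k
    _ ≤ ∑ k, G.adj u k := by
        apply Finset.sum_le_sum_of_subset_of_nonneg (Finset.sdiff_subset)
        intro k _ _
        exact G.adj_nonneg u k

lemma main_ineq (lam : ℝ) (x : V → ℝ) (hlam : 0 < lam)
    (heig : G.lap *ᵥ x = lam • x) (hG : G.Connected) (hE : G.edges.Nonempty)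
    (i : V) (hmax : ∀ k, x k ≤ x i) (hxi : 0 < x i) :
    ∃ u v : V, G.Adjacent u v ∧ lam ≤ G.degree u + G.degree v - G.commonC u v := by
  classical
  have hsum : ∀ u, lam * x u = ∑ k, G.adj u k * (x u - x k) := by
    intro u
    have h1 : (G.lap *ᵥ x) u = lam * x u := by rw [heig]; rfl
    have h2 : (G.lap *ᵥ x) u = G.degree u * x u - ∑ k, G.adj u k * x k := by
      simp only [Matrix.mulVec, dotProduct, lap, Matrix.sub_apply,
        Matrix.diagonal_apply, sub_mul, Finset.sum_sub_distrib, ite_mul, zero_mul,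
        Finset.sum_ite_eq, Finset.mem_univ, if_pos]
    rw [← h1, h2, degree, Finset.sum_mul]
    rw [← Finset.sum_sub_distrib]
    apply Finset.sum_congr rfl
    intros; ring
  set N : Finset V := Finset.univ.filter (fun k => G.adj i k ≠ 0) with hN
  have hNne : N.Nonempty := by
    obtain ⟨v, hv⟩ := G.exists_adj_ne hG hE i
    exact ⟨v, Finset.mem_filter.mpr ⟨Finset.mem_univ _, hv⟩⟩
  obtain ⟨j, hjN, hjmin⟩ := Finset.exists_min_image N x hNne
  have hAij : G.adj i j ≠ 0 := (Finset.mem_filter.mp hjN).2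
  have hminn : ∀ k, G.adj i k ≠ 0 → x j ≤ x k := fun k hk =>
    hjmin k (Finset.mem_filter.mpr ⟨Finset.mem_univ _, hk⟩)
  have hxj : x j < x i := by
    rcases lt_or_ge (x j) (x i) with h | h
    · exact h
    · exfalso
      have hxe : ∀ k, G.adj i k ≠ 0 → x k = x i := fun k hk =>
        le_antisymm (hmax k) (le_trans h (hminn k hk))
      have h0 : lam * x i = 0 := by
        rw [hsum i]
        apply Finset.sum_eq_zero
        intro k _
        by_cases hk : G.adj i k = 0
        · rw [hk]; ring
        · rw [hxe k hk]; ring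
      nlinarith
  have hterm : ∀ k, G.adj i k * (x i - x k) + G.adj j k * (x k - x j)
      ≤ max (G.adj i k) (G.adj j k) * (x i - x j) := by
    intro k
    rcases le_or_gt (x j) (x k) with h | h
    · have h1 : G.adj i k * (x i - x k) ≤ max (G.adj i k) (G.adj j k) * (x i - x k) :=
        mul_le_mul_of_nonneg_right (le_max_left _ _) (by linarith [hmax k])
      have h2 : G.adj j k * (x k - x j) ≤ max (G.adj i k) (G.adj j k) * (x k - x j) :=
        mul_le_mul_of_nonneg_right (le_max_right _ _) (by linarith)
      have : max (G.adj i k) (G.adj j k) * (x i - x k)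
          + max (G.adj i k) (G.adj j k) * (x k - x j)
          = max (G.adj i k) (G.adj j k) * (x i - x j) := by ring
      linarith
    · have hik : G.adj i k = 0 := by
        by_contra hc
        exact absurd (hminn k hc) (not_le.mpr h)
      have hb := G.adj_nonneg j k
      have hmax0 : 0 ≤ max (G.adj i k) (G.adj j k) := le_trans hb (le_max_right _ _)
      have h1 : G.adj j k * (x k - x j) ≤ 0 :=
        mul_nonpos_of_nonneg_of_nonpos hb (by linarith)
      have h2 : 0 ≤ max (G.adj i k) (G.adj j k) * (x i - x j) :=
        mul_nonneg hmax0 (by linarith)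
      have h3 : G.adj i k * (x i - x k) = 0 := by rw [hik]; ring
      linarith
  have hlm : lam * (x i - x j) ≤ (∑ k, max (G.adj i k) (G.adj j k)) * (x i - x j) := by
    have e1 : lam * (x i - x j)
        = ∑ k, (G.adj i k * (x i - x k) + G.adj j k * (x k - x j)) := by
      rw [mul_sub, hsum i, hsum j, ← Finset.sum_sub_distrib]
      apply Finset.sum_congr rfl
      intros; ring
    rw [e1, Finset.sum_mul]
    exact Finset.sum_le_sum fun k _ => hterm k
  have hlam_le : lam ≤ ∑ k, max (G.adj i k) (G.adj j k) :=
    le_of_mul_le_mul_right hlm (by linarith)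
  have hij : i ≠ j := by
    intro h
    rw [h] at hxj
    exact lt_irrefl _ hxj
  have hfin : ∑ k, max (G.adj i k) (G.adj j k)
      ≤ G.degree i + G.degree j - G.commonC i j := by
    have hsplit : ∀ f : V → ℝ,
        ∑ k, f k = ∑ k ∈ Finset.univ \ {i, j}, f k + (f i + f j) := by
      intro f
      rw [← Finset.sum_pair hij, Finset.sum_sdiff (Finset.subset_univ _)]
    have hterm2 : ∀ k, max (G.adj i k) (G.adj j k)
        + (if G.adj i k = G.adj j k then G.adj i k else 0)
        ≤ G.adj i k + G.adj j k := by
      intro k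
      have ha := G.adj_nonneg i k
      have hb := G.adj_nonneg j k
      by_cases h : G.adj i k = G.adj j k
      · rw [if_pos h, ← h, max_self]
      · rw [if_neg h]
        have := max_le (le_add_of_nonneg_right hb) (le_add_of_nonneg_left ha)
        linarith
    have hS : ∑ k ∈ Finset.univ \ {i, j},
          (max (G.adj i k) (G.adj j k) + (if G.adj i k = G.adj j k then G.adj i k else 0))
        ≤ ∑ k ∈ Finset.univ \ {i, j}, (G.adj i k + G.adj j k) :=
      Finset.sum_le_sum fun k _ => hterm2 k
    rw [Finset.sum_add_distrib, Finset.sum_add_distrib] at hS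
    have hii : G.adj i i = 0 := G.adj_self i
    have hjj : G.adj j j = 0 := G.adj_self j
    have hji : G.adj j i = G.adj i j := G.adj_symm j i
    have hmii : max (G.adj i i) (G.adj j i) = G.adj i j := by
      rw [hii, hji, max_eq_right (G.adj_nonneg i j)]
    have hmij : max (G.adj i j) (G.adj j j) = G.adj i j := by
      rw [hjj, max_eq_left (G.adj_nonneg i j)]
    rw [degree, degree, commonC,
      hsplit (fun k => max (G.adj i k) (G.adj j k)), hsplit (G.adj i), hsplit (G.adj j),
      hmii, hmij, hii, hjj, hji]
    linarith
  exact ⟨i, j, G.adjacent_of_adj_ne hAij, le_trans hlam_le hfin⟩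

end Semigraph

/-- For a connected semigraph with at least one edge, every Laplacian
eigenvalue (in particular the largest, `λ_n`) is at most
`max_{i ∼ j} (d_i + d_j - C(i,j))`, the maximum running over adjacent pairs. -/
theorem stmt11 {V : Type} [Fintype V] [DecidableEq V] (G : Semigraph V)
    (hG : G.Connected) (hE : G.edges.Nonempty) (hL : G.lap.IsHermitian) :
    ∀ i : V, ∃ u v : V, G.Adjacent u v ∧
      hL.eigenvalues i ≤ G.degree u + G.degree v - G.commonC u v :=  by
  classical
  intro i
  set lam := hL.eigenvalues i with hlam_def
  rcases le_or_gt lam 0 with hneg | hpos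
  · obtain ⟨e, he⟩ := hE
    obtain ⟨u, v, hu, hv, huv⟩ := Semigraph.two_mem (G.two_le e he) (G.nodup e he)
    refine ⟨u, v, ⟨huv, e, he, hu, hv⟩, ?_⟩
    have h1 := G.commonC_le_degree u v
    have h2 := G.degree_nonneg v
    linarith
  · have heig := hL.mulVec_eigenvectorBasis i
    set x : V → ℝ := ⇑(hL.eigenvectorBasis i) with hx
    have hx0 : x ≠ 0 := by
      have := hL.eigenvectorBasis.orthonormal.ne_zero i
      intro h
      apply this
      ext k
      exact congrFun h k
    obtain ⟨v0, hv0⟩ := Function.ne_iff.mp hx0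
    obtain ⟨i0, -, hi0⟩ := Finset.exists_max_image Finset.univ x ⟨v0, Finset.mem_univ _⟩
    have heig' : G.lap *ᵥ x = lam • x := heig
    rcases lt_or_ge 0 (x i0) with hpos' | hle
    · exact G.main_ineq lam x hpos heig' hG hE i0 (fun k => hi0 k (Finset.mem_univ _)) hpos'
    · have heig2 : G.lap *ᵥ (-x) = lam • (-x) := by
        rw [Matrix.mulVec_neg, heig', smul_neg]
      obtain ⟨i1, -, hi1⟩ := Finset.exists_max_image Finset.univ (-x) ⟨v0, Finset.mem_univ _⟩
      have hxv0 : x v0 < 0 := lt_of_le_of_ne (le_trans (hi0 v0 (Finset.mem_univ _)) hle) hv0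
      have hpos1 : 0 < (-x) i1 := by
        have := hi1 v0 (Finset.mem_univ _)
        simp only [Pi.neg_apply] at this ⊢
        linarith
      exact G.main_ineq lam (-x) hpos heig2 hG hE i1 (fun k => hi1 k (Finset.mem_univ _)) hpos1
end
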